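/- Let X be a complex vector space, G₁,…,Gₙ linear operators on X with each I−Gᵢ bijective, Γᵢ defined by I−Γᵢ=(I−Gᵢ)⁻¹, and G = Σᵢ Gᵢ. Let L be the n×n operator matrix on Xⁿ with identity operators on the diagonal and Γᵢ in every off-diagonal entry of row i. Then L is bijective on Xⁿ if and only if I−G is bijective on X. -/

import Mathlib

/-- Alternating Schwartz method: with `Γᵢ` the inversion operators of `Gᵢ`
(`I - Γᵢ = (I - Gᵢ)⁻¹`) and `G = Σᵢ Gᵢ`, the operator matrix `L` on `Xⁿ` with identities on
the diagonal and `Γᵢ` in all off-diagonal entries of row `i` is bijective iff `I - G` is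
bijective on `X`. -/
theorem stmt1 (X : Type*) [AddCommGroup X] [Module ℂ X] (n : ℕ)
    (G Γ : Fin n → Module.End ℂ X)
    (hΓ : ∀ i, (1 - Γ i) * (1 - G i) = 1 ∧ (1 - G i) * (1 - Γ i) = 1)
    (L : Module.End ℂ (Fin n → X))
    (hL : ∀ (v : Fin n → X) (i : Fin n),
      L v i = v i + ∑ j ∈ Finset.univ.erase i, Γ i (v j)) :
    Function.Bijective (L : (Fin n → X) → (Fin n → X)) ↔
      Function.Bijective ((1 - ∑ i, G i : Module.End ℂ X) : X → X) := by
  have hA : ∀ i x, (1 - G i) ((1 - Γ i) x) = x := fun i x => by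
    have := LinearMap.congr_fun (hΓ i).2 x
    simpa [Module.End.mul_apply] using this
  have hB : ∀ i x, (1 - Γ i) ((1 - G i) x) = x := fun i x => by
    have := LinearMap.congr_fun (hΓ i).1 x
    simpa [Module.End.mul_apply] using this
  have hCop : ∀ i, (1 - G i) * Γ i = -(G i) := fun i => by
    have h2 := (hΓ i).2
    have e : (1 - G i) * Γ i = (1 - G i) * 1 - (1 - G i) * (1 - Γ i) := by noncomm_ring
    rw [e, h2, mul_one]; abel
  have hDop : ∀ i, (1 - Γ i) * G i = -(Γ i) := fun i => by
    have h1 := (hΓ i).1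
    have e : (1 - Γ i) * G i = (1 - Γ i) * 1 - (1 - Γ i) * (1 - G i) := by noncomm_ring
    rw [e, h1, mul_one]; abel
  have hC : ∀ i x, (1 - G i) (Γ i x) = -(G i x) := fun i x => by
    have := LinearMap.congr_fun (hCop i) x
    simpa [Module.End.mul_apply] using this
  have hD : ∀ i x, (1 - Γ i) (G i x) = -(Γ i x) := fun i x => by
    have := LinearMap.congr_fun (hDop i) x
    simpa [Module.End.mul_apply] using this
  have hL' : ∀ (v : Fin n → X) (i : Fin n),
      L v i = (1 - Γ i) (v i) + Γ i (∑ j, v j) := by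
    intro v i
    rw [hL]
    have e : ∑ j ∈ Finset.univ.erase i, Γ i (v j)
        = Γ i (∑ j, v j) - Γ i (v i) := by
      rw [← map_sum, ← map_sub, Finset.sum_erase_eq_sub (Finset.mem_univ i)]
    rw [e]
    simp only [LinearMap.sub_apply, Module.End.one_apply]
    abel
  have key : ∀ (v w : Fin n → X), L v = w →
      (1 - ∑ i, G i : Module.End ℂ X) (∑ j, v j) = ∑ i, (1 - G i) (w i) := by
    intro v w hvw
    have h0 : ∀ i, (1 - Γ i) (v i) + Γ i (∑ j, v j) = w i := fun i => by
      rw [← hL' v i, hvw]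
    have h1 : ∀ i, v i + -(G i (∑ j, v j)) = (1 - G i) (w i) := by
      intro i
      have := congrArg (fun z => (1 - G i : Module.End ℂ X) z) (h0 i)
      rwa [map_add, hA, hC] at this
    have e : (1 - ∑ i, G i : Module.End ℂ X) (∑ j, v j)
        = ∑ i, (v i + -(G i (∑ j, v j))) := by
      simp only [LinearMap.sub_apply, Module.End.one_apply, LinearMap.sum_apply,
        LinearMap.add_apply, LinearMap.neg_apply, Finset.sum_add_distrib,
        Finset.sum_neg_distrib, sub_eq_add_neg]
    rw [e]
    exact Finset.sum_congr rfl fun i _ => h1 i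
  constructor
  · intro hLbij
    constructor
    · -- injectivity of 1 - G
      intro a b hab
      have h0 : (1 - ∑ i, G i : Module.End ℂ X) (a - b) = 0 := by
        rw [map_sub, hab, sub_self]
      set x := a - b with hxdef
      have hx : (∑ i, G i : Module.End ℂ X) x = x := by
        have : x - (∑ i, G i : Module.End ℂ X) x = 0 := by
          simpa [LinearMap.sub_apply] using h0
        have := sub_eq_zero.mp this
        exact this.symm
      set v : Fin n → X := fun i => G i x with hvdef
      have hsum : ∑ j, v j = x := by
        rw [hvdef]
        simpa [LinearMap.sum_apply] using hx
      have hLv : L v = 0 := by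
        funext i
        rw [hL' v i, hsum]
        show (1 - Γ i) (G i x) + Γ i x = (0 : Fin n → X) i
        rw [hD]
        simp
      have hv0 : v = 0 := hLbij.injective (by rw [hLv, map_zero])
      have hx0 : x = 0 := by
        rw [← hsum, hv0]
        simp
      exact sub_eq_zero.mp hx0
    · -- surjectivity of 1 - G
      intro y
      rcases Nat.eq_zero_or_pos n with hn | hn
      · subst hn
        exact ⟨y, by simp⟩
      · set i0 : Fin n := ⟨0, hn⟩ with hi0
        set w : Fin n → X := fun j => if j = i0 then (1 - Γ i0) y else 0 with hwdef
        have hws : ∑ i, (1 - G i) (w i) = y := by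
          rw [Finset.sum_eq_single i0]
          · simp only [hwdef, if_pos rfl]
            exact hA i0 y
          · intro b _ hb
            simp [hwdef, hb]
          · intro h
            exact absurd (Finset.mem_univ i0) h
        obtain ⟨v, hv⟩ := hLbij.surjective w
        exact ⟨∑ j, v j, by rw [key v w hv, hws]⟩
  · intro h
    constructor
    · -- injectivity of L
      intro a b hab
      have h0 : L (a - b) = 0 := by rw [map_sub, hab, sub_self]
      set u := a - b with hudef
      have hs0 : (1 - ∑ i, G i : Module.End ℂ X) (∑ j, u j) = 0 := by
        rw [key u 0 h0]
        simp
      have hs : ∑ j, u j = 0 := by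
        apply h.injective
        rw [hs0, map_zero]
      have hu : ∀ i, u i = 0 := by
        intro i
        have e0 : L u i = 0 := by rw [h0]; rfl
        rw [hL' u i, hs, map_zero, add_zero] at e0
        have := congrArg (fun z => (1 - G i : Module.End ℂ X) z) e0
        rwa [hA, map_zero] at this
      exact sub_eq_zero.mp (funext hu)
    · -- surjectivity of L
      intro w
      obtain ⟨s, hs⟩ := h.surjective (∑ i, (1 - G i) (w i))
      set v : Fin n → X := fun i => (1 - G i) (w i) + G i s with hvdef
      have hsum : ∑ j, v j = s := by
        have e : ∑ j, v j = (∑ i, (1 - G i) (w i)) + (∑ i, G i : Module.End ℂ X) s := by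
          simp [hvdef, Finset.sum_add_distrib, LinearMap.sum_apply]
        rw [e, ← hs]
        simp only [LinearMap.sub_apply, Module.End.one_apply]
        abel
      refine ⟨v, funext fun i => ?_⟩
      rw [hL' v i, hsum]
      show (1 - Γ i) ((1 - G i) (w i) + G i s) + Γ i s = w i
      rw [map_add, hB, hD]
      abel
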